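/- Let H be a complex Hilbert space, let A and B be Hilbert–Schmidt operators on H, and let 0 ≤ ν ≤ 1. Let T denote the block operator [[A, B],[0, 0]] on H ⊕ H. Then w_{(2,ν)}(T)² = w_{(2,ν)}(A)² + (2ν² - 2ν + 1) ‖B‖₂². -/

import Mathlib

open scoped ComplexConjugate ENNReal NNReal
set_option linter.unusedSectionVars false
set_option maxHeartbeats 1000000

variable {H : Type*} [NormedAddCommGroup H] [InnerProductSpace ℂ H] [CompleteSpace H]

/-- The operator `ν e^{iθ} A + (1-ν) e^{-iθ} A*`. -/
noncomputable def weightedPart {E : Type*} [NormedAddCommGroup E] [InnerProductSpace ℂ E]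
    [CompleteSpace E] (ν θ : ℝ) (A : E →L[ℂ] E) : E →L[ℂ] E :=
  ((ν : ℂ) * Complex.exp (θ * Complex.I)) • A +
    (((1 - ν : ℝ) : ℂ) * Complex.exp (-(θ * Complex.I))) • ContinuousLinearMap.adjoint A

/-- The Hilbert–Schmidt norm `‖A‖₂ = √(∑ᵢ ‖A eᵢ‖²)` computed w.r.t. a Hilbert basis `e`. -/
noncomputable def hsNorm {E : Type*} [NormedAddCommGroup E] [InnerProductSpace ℂ E]
    {ι : Type*} (e : HilbertBasis ι ℂ E) (A : E →L[ℂ] E) : ℝ :=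
  Real.sqrt (∑' i, ‖A (e i)‖ ^ 2)

/-- The trace `tr(T) = ∑ᵢ ⟨eᵢ, T eᵢ⟩` computed w.r.t. a Hilbert basis `e`. -/
noncomputable def trBasis {E : Type*} [NormedAddCommGroup E] [InnerProductSpace ℂ E]
    {ι : Type*} (e : HilbertBasis ι ℂ E) (T : E →L[ℂ] E) : ℂ :=
  ∑' i, (inner ℂ (e i) (T (e i)) : ℂ)

/-- The weighted Hilbert–Schmidt numerical radius
`w_{(2,ν)}(A) = sup_{θ ∈ ℝ} ‖ν e^{iθ} A + (1-ν) e^{-iθ} A*‖₂`. -/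
noncomputable def wHS {E : Type*} [NormedAddCommGroup E] [InnerProductSpace ℂ E]
    [CompleteSpace E] {ι : Type*} (e : HilbertBasis ι ℂ E) (ν : ℝ) (A : E →L[ℂ] E) : ℝ :=
  ⨆ θ : ℝ, hsNorm e (weightedPart ν θ A)

/-- The block operator `[[X, Y],[Z, W]]` on the Hilbert space direct sum `H ⊕₂ H`,
mapping `(x, y)` to `(Xx + Yy, Zx + Wy)`. -/
noncomputable def blockOp (X Y Z W : H →L[ℂ] H) :
    WithLp 2 (H × H) →L[ℂ] WithLp 2 (H × H) :=
  ((WithLp.prodContinuousLinearEquiv 2 ℂ H H).symm.toContinuousLinearMap).comp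
    ((((X.comp (ContinuousLinearMap.fst ℂ H H)) + (Y.comp (ContinuousLinearMap.snd ℂ H H))).prod
      ((Z.comp (ContinuousLinearMap.fst ℂ H H)) + (W.comp (ContinuousLinearMap.snd ℂ H H)))).comp
      (WithLp.prodContinuousLinearEquiv 2 ℂ H H).toContinuousLinearMap)

noncomputable section Aux

namespace WHSaux

universe u
variable {E : Type*} [NormedAddCommGroup E] [InnerProductSpace ℂ E] [CompleteSpace E]
variable {ι κ : Type*}

lemma tsum_sum_split {α β : Type u} (f : α ⊕ β → ℝ≥0∞) :
    ∑' u, f u = ∑' i, f (Sum.inl i) + ∑' j, f (Sum.inr j) := by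
  rw [← (Equiv.sumEquivSigmaBool α β).symm.tsum_eq f, ENNReal.tsum_sigma', tsum_bool]
  rfl

lemma parseval_ennreal (e : HilbertBasis ι ℂ E) (x : E) :
    ∑' i, (‖(inner ℂ (e i) x : ℂ)‖₊ ^ 2 : ℝ≥0∞) = (‖x‖₊ : ℝ≥0∞) ^ 2 := by
  have h := e.hasSum_inner_mul_inner x x
  have h2 : HasSum (fun i => (‖(inner ℂ (e i) x : ℂ)‖ ^ 2 : ℝ)) (‖x‖ ^ 2) := by
    have h3 : ∀ i, (inner ℂ x (e i) : ℂ) * inner ℂ (e i) x = ((‖(inner ℂ (e i) x : ℂ)‖ ^ 2 : ℝ) : ℂ) := by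
      intro i
      rw [← inner_conj_symm x (e i), mul_comm, Complex.mul_conj, Complex.normSq_eq_norm_sq]
    rw [inner_self_eq_norm_sq_to_K] at h
    simp_rw [h3] at h
    exact Complex.hasSum_ofReal.mp (by push_cast; simpa using h)
  have h4 : HasSum (fun i => (‖(inner ℂ (e i) x : ℂ)‖₊ ^ 2 : ℝ≥0)) (‖x‖₊ ^ 2) := by
    rw [← NNReal.hasSum_coe]
    push_cast
    exact h2
  rw [← ENNReal.coe_pow, ← ENNReal.tsum_coe_eq h4]
  norm_cast

/-- The squared HS norm, as an extended nonneg real. -/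
def eT (e : HilbertBasis ι ℂ E) (T : E →L[ℂ] E) : ℝ≥0∞ := ∑' i, (‖T (e i)‖₊ ^ 2 : ℝ≥0∞)

lemma eT_adjoint (e : HilbertBasis ι ℂ E) (f : HilbertBasis κ ℂ E) (T : E →L[ℂ] E) :
    eT e T = eT f (ContinuousLinearMap.adjoint T) := by
  unfold eT
  have h1 : ∀ i, (‖T (e i)‖₊ ^ 2 : ℝ≥0∞) = ∑' j, (‖(inner ℂ (f j) (T (e i)) : ℂ)‖₊ ^ 2 : ℝ≥0∞) :=
    fun i => (parseval_ennreal f (T (e i))).symm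
  have h2 : ∀ j, (‖ContinuousLinearMap.adjoint T (f j)‖₊ ^ 2 : ℝ≥0∞)
      = ∑' i, (‖(inner ℂ (e i) (ContinuousLinearMap.adjoint T (f j)) : ℂ)‖₊ ^ 2 : ℝ≥0∞) :=
    fun j => (parseval_ennreal e _).symm
  have h3 : ∀ j i, (‖(inner ℂ (e i) (ContinuousLinearMap.adjoint T (f j)) : ℂ)‖₊ : ℝ≥0)
      = ‖(inner ℂ (f j) (T (e i)) : ℂ)‖₊ := by
    intro j i
    rw [← ContinuousLinearMap.adjoint_inner_left T (e i) (f j)]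
    apply NNReal.coe_injective
    simpa using norm_inner_symm (𝕜 := ℂ) (e i) (ContinuousLinearMap.adjoint T (f j))
  simp_rw [h1, h2, h3]
  rw [ENNReal.tsum_comm]

lemma eT_basis (e : HilbertBasis ι ℂ E) (f : HilbertBasis κ ℂ E) (T : E →L[ℂ] E) :
    eT e T = eT f T := by
  rw [eT_adjoint e f T, eT_adjoint f f (ContinuousLinearMap.adjoint T),
    ContinuousLinearMap.adjoint_adjoint]

lemma eT_adjoint_self (e : HilbertBasis ι ℂ E) (T : E →L[ℂ] E) :
    eT e (ContinuousLinearMap.adjoint T) = eT e T := by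
  rw [eT_adjoint e e T]

lemma tsum_norm_sq_eq_toReal (e : HilbertBasis ι ℂ E) (T : E →L[ℂ] E) :
    ∑' i, ‖T (e i)‖ ^ 2 = (eT e T).toReal := by
  rw [eT, ENNReal.tsum_toReal_eq (fun i => by simp [ENNReal.pow_ne_top])]
  simp

lemma hsNorm_eq (e : HilbertBasis ι ℂ E) (T : E →L[ℂ] E) :
    hsNorm e T = Real.sqrt (eT e T).toReal := by
  rw [hsNorm, tsum_norm_sq_eq_toReal]

lemma hsNorm_sq (e : HilbertBasis ι ℂ E) (T : E →L[ℂ] E) :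
    hsNorm e T ^ 2 = (eT e T).toReal := by
  rw [hsNorm_eq, Real.sq_sqrt ENNReal.toReal_nonneg]

lemma eT_smul (e : HilbertBasis ι ℂ E) (c : ℂ) (T : E →L[ℂ] E) :
    eT e (c • T) = (‖c‖₊ ^ 2 : ℝ≥0∞) * eT e T := by
  unfold eT
  rw [← ENNReal.tsum_mul_left]
  congr 1; ext i
  rw [ContinuousLinearMap.smul_apply, nnnorm_smul]
  push_cast
  ring

lemma eT_ne_top (e : HilbertBasis ι ℂ E) (T : E →L[ℂ] E)
    (h : Summable fun i => ‖T (e i)‖ ^ 2) : eT e T ≠ ⊤ := by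
  unfold eT
  simp_rw [← ENNReal.coe_pow]
  exact ENNReal.tsum_coe_ne_top_iff_summable.mpr (NNReal.summable_coe.mp (by simpa using h))

lemma sq_add_le (a b : ℝ≥0∞) : (a + b) ^ 2 ≤ 4 * (a ^ 2 + b ^ 2) := by
  have h1 : a + b ≤ 2 * (a ⊔ b) := by
    rw [two_mul]
    exact add_le_add le_sup_left le_sup_right
  calc (a + b) ^ 2 ≤ (2 * (a ⊔ b)) ^ 2 := by gcongr
    _ = 4 * (a ⊔ b) ^ 2 := by rw [mul_pow]; ring_nf
    _ ≤ 4 * (a ^ 2 + b ^ 2) := by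
        gcongr
        rcases max_choice a b with h | h <;> rw [h]
        · exact le_add_right le_rfl
        · exact le_add_left le_rfl

lemma eT_add_le (e : HilbertBasis ι ℂ E) (S T : E →L[ℂ] E) :
    eT e (S + T) ≤ 4 * (eT e S + eT e T) := by
  unfold eT
  calc ∑' i, (‖(S + T) (e i)‖₊ ^ 2 : ℝ≥0∞)
      ≤ ∑' i, (4 * ((‖S (e i)‖₊ ^ 2 : ℝ≥0∞) + (‖T (e i)‖₊ ^ 2 : ℝ≥0∞))) := by
        apply ENNReal.tsum_le_tsum
        intro i
        rw [ContinuousLinearMap.add_apply]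
        calc (‖S (e i) + T (e i)‖₊ ^ 2 : ℝ≥0∞)
            ≤ ((‖S (e i)‖₊ : ℝ≥0∞) + ‖T (e i)‖₊) ^ 2 := by
              gcongr
              norm_cast
              exact nnnorm_add_le _ _
          _ ≤ 4 * ((‖S (e i)‖₊ : ℝ≥0∞) ^ 2 + (‖T (e i)‖₊ : ℝ≥0∞) ^ 2) := sq_add_le _ _
    _ = 4 * (∑' i, (‖S (e i)‖₊ ^ 2 : ℝ≥0∞) + ∑' i, (‖T (e i)‖₊ ^ 2 : ℝ≥0∞)) := by
        rw [ENNReal.tsum_mul_left, ENNReal.tsum_add]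

end WHSaux

namespace WHSaux

variable {ι : Type*}

lemma hilbert_eq_zero (e : HilbertBasis ι ℂ H) (x : H) (h : ∀ i, (inner ℂ (e i) x : ℂ) = 0) :
    x = 0 := by
  have hr : e.repr x = 0 := by
    apply lp.ext
    funext i
    rw [e.repr_apply_apply]
    simpa using h i
  simpa using congrArg e.repr.symm hr

def inlV (e : HilbertBasis ι ℂ H) (i : ι) : WithLp 2 (H × H) :=
  (WithLp.equiv 2 (H × H)).symm (e i, 0)
def inrV (e : HilbertBasis ι ℂ H) (i : ι) : WithLp 2 (H × H) :=
  (WithLp.equiv 2 (H × H)).symm (0, e i)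

/-- Hilbert basis of the L² product built from a Hilbert basis of `H`. -/
def prodBasis (e : HilbertBasis ι ℂ H) : HilbertBasis (ι ⊕ ι) ℂ (WithLp 2 (H × H)) := by
  classical
  refine HilbertBasis.mkOfOrthogonalEqBot (v := Sum.elim (inlV e) (inrV e)) ?_ ?_
  · rw [orthonormal_iff_ite]
    have he := orthonormal_iff_ite.mp e.orthonormal
    rintro (i | i) (j | j) <;>
      simp [inlV, inrV, WithLp.prod_inner_apply, WithLp.toLp_fst, WithLp.toLp_snd, WithLp.ofLp_fst, WithLp.ofLp_snd,
        he i j, Sum.inl.injEq, Sum.inr.injEq]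
  · rw [Submodule.eq_bot_iff]
    intro x hx
    have key : ∀ u : ι ⊕ ι, (inner ℂ (Sum.elim (inlV e) (inrV e) u) x : ℂ) = 0 := fun u =>
      Submodule.inner_right_of_mem_orthogonal
        (Submodule.subset_span (Set.mem_range_self u)) hx
    have h1 : x.fst = 0 := by
      apply hilbert_eq_zero e
      intro i
      have := key (Sum.inl i)
      simpa [inlV, WithLp.prod_inner_apply, WithLp.toLp_fst, WithLp.toLp_snd, WithLp.ofLp_fst, WithLp.ofLp_snd]
        using this
    have h2 : x.snd = 0 := by
      apply hilbert_eq_zero e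
      intro i
      have := key (Sum.inr i)
      simpa [inrV, WithLp.prod_inner_apply, WithLp.toLp_fst, WithLp.toLp_snd, WithLp.ofLp_fst, WithLp.ofLp_snd]
        using this
    apply (WithLp.equiv 2 (H × H)).injective
    ext
    · simpa [WithLp.equiv_apply, WithLp.ofLp_fst] using h1
    · simpa [WithLp.equiv_apply, WithLp.ofLp_snd] using h2

lemma prodBasis_inl (e : HilbertBasis ι ℂ H) (i : ι) : prodBasis e (Sum.inl i) = inlV e i := by
  rw [prodBasis, HilbertBasis.coe_mkOfOrthogonalEqBot]; rfl

lemma prodBasis_inr (e : HilbertBasis ι ℂ H) (i : ι) : prodBasis e (Sum.inr i) = inrV e i := by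
  rw [prodBasis, HilbertBasis.coe_mkOfOrthogonalEqBot]; rfl

lemma blockOp_apply_fst (X Y Z W : H →L[ℂ] H) (u : WithLp 2 (H × H)) :
    (blockOp X Y Z W u).fst = X u.fst + Y u.snd := rfl

lemma blockOp_apply_snd (X Y Z W : H →L[ℂ] H) (u : WithLp 2 (H × H)) :
    (blockOp X Y Z W u).snd = Z u.fst + W u.snd := rfl

lemma blockOp_adjoint (X Y Z W : H →L[ℂ] H) :
    ContinuousLinearMap.adjoint (blockOp X Y Z W)
      = blockOp (ContinuousLinearMap.adjoint X) (ContinuousLinearMap.adjoint Z)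
          (ContinuousLinearMap.adjoint Y) (ContinuousLinearMap.adjoint W) := by
  symm
  rw [ContinuousLinearMap.eq_adjoint_iff]
  intro u v
  simp only [WithLp.prod_inner_apply, WithLp.ofLp_fst, WithLp.ofLp_snd, blockOp_apply_fst, blockOp_apply_snd,
    inner_add_left, inner_add_right, ContinuousLinearMap.adjoint_inner_left]
  ring

lemma ennnorm_sq_prod (u : WithLp 2 (H × H)) :
    (‖u‖₊ ^ 2 : ℝ≥0∞) = (‖u.fst‖₊ ^ 2 : ℝ≥0∞) + (‖u.snd‖₊ ^ 2 : ℝ≥0∞) := by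
  have h := WithLp.prod_norm_sq_eq_of_L2 u
  rw [← ENNReal.coe_pow, ← ENNReal.coe_pow, ← ENNReal.coe_pow, ← ENNReal.coe_add]
  congr 1
  apply NNReal.coe_injective
  push_cast
  exact h

lemma eT_blockOp (e : HilbertBasis ι ℂ H) (X Y Z W : H →L[ℂ] H) :
    eT (prodBasis e) (blockOp X Y Z W) = (eT e X + eT e Z) + (eT e Y + eT e W) := by
  unfold eT
  rw [tsum_sum_split]
  have hl : ∀ i, (‖blockOp X Y Z W (prodBasis e (Sum.inl i))‖₊ ^ 2 : ℝ≥0∞)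
      = (‖X (e i)‖₊ ^ 2 : ℝ≥0∞) + (‖Z (e i)‖₊ ^ 2 : ℝ≥0∞) := by
    intro i
    rw [prodBasis_inl, ennnorm_sq_prod, blockOp_apply_fst, blockOp_apply_snd]
    simp [inlV, WithLp.toLp_fst, WithLp.toLp_snd, WithLp.ofLp_fst, WithLp.ofLp_snd]
  have hr : ∀ i, (‖blockOp X Y Z W (prodBasis e (Sum.inr i))‖₊ ^ 2 : ℝ≥0∞)
      = (‖Y (e i)‖₊ ^ 2 : ℝ≥0∞) + (‖W (e i)‖₊ ^ 2 : ℝ≥0∞) := by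
    intro i
    rw [prodBasis_inr, ennnorm_sq_prod, blockOp_apply_fst, blockOp_apply_snd]
    simp [inrV, WithLp.toLp_fst, WithLp.toLp_snd, WithLp.ofLp_fst, WithLp.ofLp_snd]
  simp_rw [hl, hr]
  rw [ENNReal.tsum_add, ENNReal.tsum_add]

lemma eT_zero (e : HilbertBasis ι ℂ H) : eT e (0 : H →L[ℂ] H) = 0 := by
  unfold eT; simp

lemma wp_blockOp (ν θ : ℝ) (A B : H →L[ℂ] H) :
    weightedPart ν θ (blockOp A B 0 0)
      = blockOp (weightedPart ν θ A) (((ν : ℂ) * Complex.exp (θ * Complex.I)) • B)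
          ((((1 - ν : ℝ) : ℂ) * Complex.exp (-(θ * Complex.I))) •
            ContinuousLinearMap.adjoint B) 0 := by
  unfold weightedPart
  rw [blockOp_adjoint, map_zero]
  refine ContinuousLinearMap.ext fun u => ?_
  apply (WithLp.equiv 2 (H × H)).injective
  apply Prod.ext
  · simp only [WithLp.equiv_apply, WithLp.ofLp_fst, ContinuousLinearMap.add_apply, ContinuousLinearMap.smul_apply,
      blockOp_apply_fst, blockOp_apply_snd, WithLp.add_fst, WithLp.smul_fst,
      ContinuousLinearMap.zero_apply, add_zero, smul_add]
    abel
  · simp only [WithLp.equiv_apply, WithLp.ofLp_snd, ContinuousLinearMap.add_apply, ContinuousLinearMap.smul_apply,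
      blockOp_apply_fst, blockOp_apply_snd, WithLp.add_snd, WithLp.smul_snd,
      ContinuousLinearMap.zero_apply, add_zero, zero_add, smul_add, smul_zero]

lemma nnnorm_cexp (ν θ : ℝ) (hν : 0 ≤ ν) :
    (‖(ν : ℂ) * Complex.exp (θ * Complex.I)‖₊ ^ 2 : ℝ≥0∞) = ENNReal.ofReal (ν ^ 2) := by
  have h : ‖(ν : ℂ) * Complex.exp (θ * Complex.I)‖ = ν := by
    rw [norm_mul, Complex.norm_exp_ofReal_mul_I, mul_one,
      Complex.norm_real, Real.norm_eq_abs, abs_of_nonneg hν]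
  rw [← enorm_eq_nnnorm, ← ofReal_norm, ← ENNReal.ofReal_pow (norm_nonneg _), h]

lemma nnnorm_dexp (ν θ : ℝ) (hν : ν ≤ 1) :
    (‖((1 - ν : ℝ) : ℂ) * Complex.exp (-(θ * Complex.I))‖₊ ^ 2 : ℝ≥0∞)
      = ENNReal.ofReal ((1 - ν) ^ 2) := by
  have he : -(↑θ * Complex.I) = ((-θ : ℝ) : ℂ) * Complex.I := by push_cast; ring
  have h : ‖((1 - ν : ℝ) : ℂ) * Complex.exp (-(θ * Complex.I))‖ = 1 - ν := by
    rw [he, norm_mul, Complex.norm_exp_ofReal_mul_I, mul_one,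
      Complex.norm_real, Real.norm_eq_abs, abs_of_nonneg (by linarith : (0:ℝ) ≤ 1 - ν)]
  rw [← enorm_eq_nnnorm, ← ofReal_norm, ← ENNReal.ofReal_pow (norm_nonneg _), h]

lemma key {κ : Type*} (e : HilbertBasis ι ℂ H) (f : HilbertBasis κ ℂ (WithLp 2 (H × H)))
    (A B : H →L[ℂ] H) (ν θ : ℝ) (hν₀ : 0 ≤ ν) (hν₁ : ν ≤ 1) :
    eT f (weightedPart ν θ (blockOp A B 0 0))
      = eT e (weightedPart ν θ A) + ENNReal.ofReal (2 * ν ^ 2 - 2 * ν + 1) * eT e B := by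
  rw [eT_basis f (prodBasis e), wp_blockOp, eT_blockOp, eT_smul, eT_smul, eT_adjoint_self,
    eT_zero, nnnorm_cexp ν θ hν₀, nnnorm_dexp ν θ hν₁]
  rw [add_zero, add_assoc, ← add_mul, ← ENNReal.ofReal_add (sq_nonneg _) (sq_nonneg _)]
  congr 2
  ring_nf

lemma eT_wp_le (e : HilbertBasis ι ℂ H) (A : H →L[ℂ] H) (ν θ : ℝ)
    (hν₀ : 0 ≤ ν) (hν₁ : ν ≤ 1) :
    eT e (weightedPart ν θ A) ≤ 8 * eT e A := by
  unfold weightedPart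
  refine (eT_add_le e _ _).trans ?_
  rw [eT_smul, eT_smul, eT_adjoint_self, nnnorm_cexp ν θ hν₀, nnnorm_dexp ν θ hν₁]
  have h1 : ENNReal.ofReal (ν ^ 2) ≤ 1 := by
    rw [show (1 : ℝ≥0∞) = ENNReal.ofReal 1 by simp]
    exact ENNReal.ofReal_le_ofReal (by nlinarith)
  have h2 : ENNReal.ofReal ((1 - ν) ^ 2) ≤ 1 := by
    rw [show (1 : ℝ≥0∞) = ENNReal.ofReal 1 by simp]
    exact ENNReal.ofReal_le_ofReal (by nlinarith)
  calc 4 * (ENNReal.ofReal (ν ^ 2) * eT e A + ENNReal.ofReal ((1 - ν) ^ 2) * eT e A)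
      ≤ 4 * (1 * eT e A + 1 * eT e A) := by gcongr
    _ = 8 * eT e A := by rw [one_mul, ← two_mul, ← mul_assoc]; norm_num

end WHSaux
end Aux

theorem stmt14 {ι κ : Type*} (e : HilbertBasis ι ℂ H)
    (f : HilbertBasis κ ℂ (WithLp 2 (H × H)))
    (A B : H →L[ℂ] H)
    (hA : Summable fun i => ‖A (e i)‖ ^ 2) (hB : Summable fun i => ‖B (e i)‖ ^ 2)
    (ν : ℝ) (hν₀ : 0 ≤ ν) (hν₁ : ν ≤ 1) :
    (wHS f ν (blockOp A B 0 0)) ^ 2 =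
      (wHS e ν A) ^ 2 + (2 * ν ^ 2 - 2 * ν + 1) * (hsNorm e B) ^ 2 := by
  classical
  open WHSaux in
  set c₀ : ℝ := (2 * ν ^ 2 - 2 * ν + 1) * (hsNorm e B) ^ 2 with hc₀def
  have hcoef : (0:ℝ) ≤ 2 * ν ^ 2 - 2 * ν + 1 := by nlinarith
  have hc₀ : 0 ≤ c₀ := mul_nonneg hcoef (sq_nonneg _)
  set g : ℝ → ℝ := fun θ => hsNorm e (weightedPart ν θ A) with hgdef
  have hg0 : ∀ θ, 0 ≤ g θ := fun θ => Real.sqrt_nonneg _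
  have hAtop : eT e A ≠ ⊤ := eT_ne_top e A hA
  have hBtop : eT e B ≠ ⊤ := eT_ne_top e B hB
  have h8top : (8 : ℝ≥0∞) * eT e A ≠ ⊤ := ENNReal.mul_ne_top (by simp) hAtop
  have hwptop : ∀ θ, eT e (weightedPart ν θ A) ≠ ⊤ := fun θ =>
    ne_top_of_le_ne_top h8top (eT_wp_le e A ν θ hν₀ hν₁)
  have hsq : ∀ θ, hsNorm f (weightedPart ν θ (blockOp A B 0 0))
      = Real.sqrt (g θ ^ 2 + c₀) := by
    intro θ
    rw [hsNorm_eq f, key e f A B ν θ hν₀ hν₁,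
      ENNReal.toReal_add (hwptop θ) (ENNReal.mul_ne_top ENNReal.ofReal_ne_top hBtop),
      ENNReal.toReal_mul, ENNReal.toReal_ofReal hcoef]
    rw [hgdef]
    simp only
    rw [hsNorm_sq e (weightedPart ν θ A), hc₀def, hsNorm_sq e B]
  have hbdd : BddAbove (Set.range g) := by
    refine ⟨Real.sqrt ((8 * eT e A).toReal), ?_⟩
    rintro _ ⟨θ, rfl⟩
    rw [hgdef]
    simp only
    rw [hsNorm_eq]
    exact Real.sqrt_le_sqrt (ENNReal.toReal_mono h8top (eT_wp_le e A ν θ hν₀ hν₁))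
  have hM0 : 0 ≤ wHS e ν A := (hg0 0).trans (le_ciSup hbdd 0)
  set φ : ℝ → ℝ := fun t => Real.sqrt (max t 0 ^ 2 + c₀) with hφdef
  have hφmono : Monotone φ := by
    intro s t h
    apply Real.sqrt_le_sqrt
    have h1 : max s 0 ≤ max t 0 := max_le_max h le_rfl
    have h2 : (0:ℝ) ≤ max s 0 := le_max_right _ _
    nlinarith
  have hφcont : Continuous φ :=
    Real.continuous_sqrt.comp (((continuous_id.max continuous_const).pow 2).add
      continuous_const)
  have hwHSe : wHS e ν A = ⨆ θ, g θ := rfl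
  have step1 : wHS f ν (blockOp A B 0 0) = ⨆ θ, φ (g θ) := by
    unfold wHS
    congr 1
    ext θ
    rw [hsq θ, hφdef]
    simp only
    rw [max_eq_left (hg0 θ)]
  have step2 : (⨆ θ, φ (g θ)) = φ (⨆ θ, g θ) :=
    (hφmono.map_ciSup_of_continuousAt hφcont.continuousAt hbdd).symm
  rw [step1, step2, ← hwHSe, hφdef]
  simp only
  rw [max_eq_left hM0, Real.sq_sqrt (by positivity)]
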